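/- arXiv:2405.17045 — 3 statements merged into one kernel-verified Lean document; each statement's English description precedes it below -/
import Mathlib

section
/- Let L : B → C be a bounded linear operator between Banach spaces. Suppose that for every ε > 0 there exist finitely many continuous linear functionals l_1, …, l_N : B → ℝ such that ‖Lx‖_C ≤ ε‖x‖_B + Σ_{i=1}^N |l_i(x)| for all x ∈ B. Then L is a compact operator. -/
open Metric Set

/-- **Compactness criterion** (Faure–Gouëzel–Lanneau, Proposition 2.8).
If for every `ε > 0` there are finitely many continuous linear functionals `lᵢ`
such that `‖L x‖ ≤ ε ‖x‖ + Σᵢ |lᵢ x|` for all `x`, then `L` is a compact operator. -/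
theorem compact_of_finitely_many_functionals
    {B C : Type*} [NormedAddCommGroup B] [NormedSpace ℝ B] [CompleteSpace B]
    [NormedAddCommGroup C] [NormedSpace ℝ C] [CompleteSpace C]
    (L : B →L[ℝ] C)
    (h : ∀ ε > (0 : ℝ), ∃ (N : ℕ) (l : Fin N → (B →L[ℝ] ℝ)),
      ∀ x : B, ‖L x‖ ≤ ε * ‖x‖ + ∑ i : Fin N, |l i x|) :
    IsCompactOperator L := by
  classical
  have key : TotallyBounded (⇑L '' Metric.closedBall (0 : B) 1) := by
    rw [Metric.totallyBounded_iff]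
    intro ε hε
    obtain ⟨N, l, hl⟩ := h (ε / 4) (by linarith)
    set Φ : B →L[ℝ] (Fin N → ℝ) := ContinuousLinearMap.pi l with hΦdef
    have hKtb : TotallyBounded (⇑Φ '' Metric.closedBall (0 : B) 1) := by
      refine TotallyBounded.subset ?_
        (isCompact_closedBall (0 : Fin N → ℝ) ‖Φ‖).totallyBounded
      rintro _ ⟨x, hx, rfl⟩
      simp only [Metric.mem_closedBall, dist_zero_right]
      calc ‖Φ x‖ ≤ ‖Φ‖ * ‖x‖ := Φ.le_opNorm x
        _ ≤ ‖Φ‖ * 1 := by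
            have hx1 : ‖x‖ ≤ 1 := by
              simpa [Metric.mem_closedBall, dist_zero_right] using hx
            exact mul_le_mul_of_nonneg_left hx1 (norm_nonneg Φ)
        _ = ‖Φ‖ := mul_one _
    set δ : ℝ := ε / (4 * (N + 1)) with hδdef
    have hδ : 0 < δ := by positivity
    obtain ⟨t, hts, htf, hcov⟩ :=
      totallyBounded_iff_subset.1 hKtb _ (Metric.dist_mem_uniformity hδ)
    have hg : ∀ y ∈ t, ∃ x, x ∈ Metric.closedBall (0 : B) 1 ∧ Φ x = y := by
      intro y hy
      obtain ⟨x, hx, hxy⟩ := hts hy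
      exact ⟨x, hx, hxy⟩
    choose! g hg1 hg2 using hg
    refine ⟨(fun y => L (g y)) '' t, htf.image _, ?_⟩
    rintro _ ⟨x, hx, rfl⟩
    have hx1 : ‖x‖ ≤ 1 := by
      simpa [Metric.mem_closedBall, dist_zero_right] using hx
    have hΦx : Φ x ∈ ⋃ y ∈ t, {z | (z, y) ∈ {p : (Fin N → ℝ) × (Fin N → ℝ) | dist p.1 p.2 < δ}} :=
      hcov ⟨x, hx, rfl⟩
    simp only [mem_iUnion, mem_setOf_eq, exists_prop] at hΦx
    obtain ⟨y, hyt, hdy⟩ := hΦx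
    refine mem_iUnion₂.2 ⟨L (g y), mem_image_of_mem _ hyt, ?_⟩
    rw [Metric.mem_ball, dist_eq_norm, ← map_sub]
    have hgy1 : ‖g y‖ ≤ 1 := by
      simpa [Metric.mem_closedBall, dist_zero_right] using hg1 y hyt
    have hsum : ∀ i : Fin N, |l i (x - g y)| ≤ δ := by
      intro i
      have h1 : l i (x - g y) = (Φ x - Φ (g y)) i := by
        simp [hΦdef, ContinuousLinearMap.pi_apply, map_sub]
      have h2 : |(Φ x - Φ (g y)) i| ≤ ‖Φ x - Φ (g y)‖ := by
        simpa [Real.norm_eq_abs] using norm_le_pi_norm (Φ x - Φ (g y)) i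
      have h3 : ‖Φ x - Φ (g y)‖ < δ := by
        rw [← dist_eq_norm, hg2 y hyt]
        exact hdy
      rw [h1]
      exact h2.trans h3.le
    have hnorm : ‖x - g y‖ ≤ 2 := by
      calc ‖x - g y‖ ≤ ‖x‖ + ‖g y‖ := norm_sub_le _ _
        _ ≤ 2 := by linarith
    calc ‖L (x - g y)‖ ≤ ε / 4 * ‖x - g y‖ + ∑ i : Fin N, |l i (x - g y)| := hl _
      _ ≤ ε / 4 * 2 + ∑ _i : Fin N, δ := by
          refine add_le_add ?_ (Finset.sum_le_sum fun i _ => hsum i)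
          exact mul_le_mul_of_nonneg_left hnorm (by linarith)
      _ = ε / 2 + N * δ := by
          rw [Finset.sum_const, Finset.card_univ, Fintype.card_fin]
          ring
      _ < ε := by
          have h1 : (N : ℝ) * δ ≤ ((N : ℝ) + 1) * δ := by
            have : (N : ℝ) ≤ (N : ℝ) + 1 := by linarith
            exact mul_le_mul_of_nonneg_right this hδ.le
          have h2 : ((N : ℝ) + 1) * δ = ε / 4 := by
            rw [hδdef]
            have : ((N : ℝ) + 1) ≠ 0 := by positivity
            field_simp
          linarith
  exact (isCompactOperator_iff_isCompact_closure_image_closedBall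
    (L : B →ₗ[ℝ] C) zero_lt_one).mpr
    (TotallyBounded.isCompact_of_isClosed key.closure isClosed_closure)
end

section
/- Let B₁, B₂ be Banach spaces with a continuous injection B₁ ↪ B₂, and let T be a bounded operator on both B₁ and B₂ (agreeing on B₁). Assume ρ_ess(T|B₁) ≤ ρ and ρ_ess(T|B₂) ≤ ρ for some ρ > 0, and that a common dense subspace is invariant. Then the eigenvalues of T on B₁ and on B₂ in {z ∈ ℂ : |z| > ρ} coincide, together with their generalized eigenspaces, which are contained in B₁ ∩ B₂. (Spectral independence of the Banach space, Baladi–Tsujii Lemma A.1, in the special case where the spaces are nested.) -/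
open Filter Metric Topology


/-- The essential spectral radius of a bounded operator: the infimum of the spectral radii
of its compact perturbations. -/
noncomputable def essSpectralRadius {B : Type*} [NormedAddCommGroup B] [NormedSpace ℂ B]
    (T : B →L[ℂ] B) : ENNReal :=
  ⨅ K ∈ {K : B →L[ℂ] B | IsCompactOperator K}, spectralRadius ℂ (T - K)

namespace SpecInd

variable {B : Type*} [NormedAddCommGroup B] [NormedSpace ℂ B]

lemma exists_subseq_tendsto (K : B →L[ℂ] B) (hK : IsCompactOperator K)
    (x : ℕ → B) {c : ℝ} (hx : ∀ n, ‖x n‖ ≤ c) :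
    ∃ z, ∃ φ : ℕ → ℕ, StrictMono φ ∧ Tendsto (fun n => K (x (φ n))) atTop (𝓝 z) := by
  have h := hK.isCompact_closure_image_closedBall (𝕜₁ := ℂ) (f := (K : B →ₗ[ℂ] B)) c
  have hmem : ∀ n, K (x n) ∈ closure ((K : B →ₗ[ℂ] B) '' closedBall (0:B) c) := fun n =>
    subset_closure ⟨x n, by simpa [mem_closedBall, dist_zero_right] using hx n, rfl⟩
  obtain ⟨z, _, φ, hφ, hz⟩ := h.tendsto_subseq hmem
  exact ⟨z, φ, hφ, hz⟩

lemma unit_inv_apply {G : B →L[ℂ] B} (hG : IsUnit G) (x : B) :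
    ((hG.unit⁻¹ : (B →L[ℂ] B)ˣ) : B →L[ℂ] B) (G x) = x := by
  have h3 : ((hG.unit⁻¹ : (B →L[ℂ] B)ˣ) : B →L[ℂ] B) * G = 1 := by
    have := congrArg (Units.val) (inv_mul_cancel hG.unit)
    simpa [hG.unit_spec] using this
  calc ((hG.unit⁻¹ : (B →L[ℂ] B)ˣ) : B →L[ℂ] B) (G x)
      = (((hG.unit⁻¹ : (B →L[ℂ] B)ˣ) : B →L[ℂ] B) * G) x :=
        (ContinuousLinearMap.mul_apply _ _ _).symm
    _ = x := by rw [h3]; simp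

lemma isClosed_range (G K : B →L[ℂ] B) (hG : IsUnit G) (hK : IsCompactOperator K) :
    IsClosed (LinearMap.range (G + K).toLinearMap : Set B) := by
  set Φ := G + K with hΦ
  set N := LinearMap.ker Φ.toLinearMap with hN
  set Gi : B →L[ℂ] B := ((hG.unit⁻¹ : (B →L[ℂ] B)ˣ) : B →L[ℂ] B) with hGi
  have hGinv : ∀ x : B, Gi (Φ x - K x) = x := by
    intro x
    have : Φ x - K x = G x := by simp [hΦ]
    rw [this]; exact unit_inv_apply hG x
  apply IsSeqClosed.isClosed
  intro u y hu huy
  choose x hx using fun n => LinearMap.mem_range.mp (hu n)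
  simp only [ContinuousLinearMap.coe_coe] at hx
  -- near-minimizers of distance to the kernel
  have hNne : (N : Set B).Nonempty := ⟨0, N.zero_mem⟩
  have hsel : ∀ n : ℕ, ∃ v ∈ (N : Set B), dist (x n) v < infDist (x n) N + 1/(n+1) := by
    intro n
    apply (infDist_lt_iff hNne).mp
    have : (0:ℝ) < 1/(n+1) := by positivity
    linarith
  choose nv hnv hnvd using hsel
  set x' : ℕ → B := fun n => x n - nv n with hx'
  have hΦx' : ∀ n, Φ (x' n) = u n := by
    intro n
    have : Φ (nv n) = 0 := LinearMap.mem_ker.mp (hnv n)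
    simp [hx', map_sub, this, hx n]
  have hlow : ∀ n, ∀ w ∈ (N : Set B), infDist (x n) N ≤ ‖x' n - w‖ := by
    intro n w hw
    have : x' n - w = x n - (nv n + w) := by simp [hx']; abel
    rw [this, ← dist_eq_norm]
    exact infDist_le_dist_of_mem (N.add_mem (hnv n) hw)
  have hupp : ∀ n, ‖x' n‖ ≤ infDist (x n) N + 1/(n+1) := by
    intro n
    have := hnvd n
    rw [dist_eq_norm] at this
    exact le_of_lt this
  by_cases hb : ∃ c, ∀ n, ‖x' n‖ ≤ c
  · -- bounded case: extract convergent subsequence, get preimage of y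
    obtain ⟨c, hc⟩ := hb
    obtain ⟨z, φ, hφ, hz⟩ := exists_subseq_tendsto K hK x' hc
    have huφ : Tendsto (fun n => u (φ n)) atTop (𝓝 y) := huy.comp hφ.tendsto_atTop
    have hx'φ : Tendsto (fun n => x' (φ n)) atTop (𝓝 (Gi (y - z))) := by
      have h1 : ∀ n, x' (φ n) = Gi (u (φ n) - K (x' (φ n))) := by
        intro n; rw [← hΦx' (φ n)]; exact (hGinv _).symm
      have h2 : Tendsto (fun n => Gi (u (φ n) - K (x' (φ n)))) atTop (𝓝 (Gi (y - z))) :=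
        (Gi.continuous.tendsto _).comp (huφ.sub hz)
      exact h2.congr (fun n => (h1 n).symm)
    have h3 : Tendsto (fun n => Φ (x' (φ n))) atTop (𝓝 (Φ (Gi (y - z)))) :=
      (Φ.continuous.tendsto _).comp hx'φ
    have h4 : Tendsto (fun n => Φ (x' (φ n))) atTop (𝓝 y) := by
      have := huφ.congr (fun n => (hΦx' (φ n)).symm)
      exact this
    exact ⟨Gi (y - z), tendsto_nhds_unique h3 h4⟩
  · -- unbounded case: derive a contradiction
    exfalso
    push_neg at hb
    have hψ : ∀ n : ℕ, ∃ m, (n:ℝ) + 1 < ‖x' m‖ := fun n => hb ((n:ℝ)+1)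
    choose ψ hψ' using hψ
    have hpos : ∀ n, (0:ℝ) < ‖x' (ψ n)‖ := fun n => lt_of_le_of_lt (by positivity) (hψ' n)
    set v : ℕ → B := fun n => (‖x' (ψ n)‖)⁻¹ • x' (ψ n) with hv
    have hvnorm : ∀ n, ‖v n‖ = 1 := by
      intro n
      rw [hv]
      simp only [norm_smul, norm_inv, norm_norm]
      exact inv_mul_cancel₀ (ne_of_gt (hpos n))
    -- u is bounded
    obtain ⟨Cu, hCu⟩ : ∃ Cu, ∀ n, ‖u n‖ ≤ Cu := by
      have : BddAbove (Set.range fun n => ‖u n‖) :=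
        (huy.norm).bddAbove_range
      obtain ⟨Cu, hCu⟩ := this
      exact ⟨Cu, fun n => hCu ⟨n, rfl⟩⟩
    have hΦv : Tendsto (fun n => Φ (v n)) atTop (𝓝 0) := by
      have heq : ∀ n, Φ (v n) = (‖x' (ψ n)‖)⁻¹ • u (ψ n) := by
        intro n; rw [hv]; rw [Φ.map_smul_of_tower]; rw [hΦx']
      have hbnd : ∀ n, ‖Φ (v n)‖ ≤ Cu * (1/((n:ℝ)+1)) := by
        intro n
        rw [heq n, norm_smul, norm_inv, norm_norm]
        have h1 : (‖x' (ψ n)‖)⁻¹ ≤ ((n:ℝ)+1)⁻¹ := by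
          apply inv_anti₀ (by positivity) (le_of_lt (hψ' n))
        have h2 : (0:ℝ) ≤ Cu := le_trans (norm_nonneg _) (hCu 0)
        calc (‖x' (ψ n)‖)⁻¹ * ‖u (ψ n)‖ ≤ ((n:ℝ)+1)⁻¹ * Cu := by
              apply mul_le_mul h1 (hCu _) (norm_nonneg _) (by positivity)
          _ = Cu * (1/((n:ℝ)+1)) := by ring
      have hlim : Tendsto (fun n : ℕ => Cu * (1/((n:ℝ)+1))) atTop (𝓝 0) := by
        have := tendsto_one_div_add_atTop_nhds_zero_nat.const_mul Cu
        simpa using this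
      apply squeeze_zero_norm hbnd hlim
    obtain ⟨z, φ, hφ, hz⟩ := exists_subseq_tendsto K hK v (fun n => le_of_eq (hvnorm n))
    set w := Gi (0 - z) with hw
    have hvφ : Tendsto (fun n => v (φ n)) atTop (𝓝 w) := by
      have h1 : ∀ n, v (φ n) = Gi (Φ (v (φ n)) - K (v (φ n))) := fun n => (hGinv _).symm
      have h2 : Tendsto (fun n => Gi (Φ (v (φ n)) - K (v (φ n)))) atTop (𝓝 (Gi (0 - z))) :=
        (Gi.continuous.tendsto _).comp ((hΦv.comp hφ.tendsto_atTop).sub hz)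
      exact (h2.congr (fun n => (h1 n).symm))
    have hwN : w ∈ (N : Set B) := by
      have h3 : Tendsto (fun n => Φ (v (φ n))) atTop (𝓝 (Φ w)) :=
        (Φ.continuous.tendsto _).comp hvφ
      have h4 : Tendsto (fun n => Φ (v (φ n))) atTop (𝓝 0) := hΦv.comp hφ.tendsto_atTop
      exact LinearMap.mem_ker.mpr (tendsto_nhds_unique h3 h4)
    -- v n stays far from N
    have hfar : ∀ n : ℕ, (1 : ℝ) - 1/((n:ℝ)+1) ≤ ‖v n - w‖ := by
      intro n
      have h1 : infDist (x (ψ n)) N ≤ ‖x' (ψ n) - ‖x' (ψ n)‖ • w‖ := by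
        apply hlow
        exact N.smul_of_tower_mem _ hwN
      have h2 : x' (ψ n) - ‖x' (ψ n)‖ • w = ‖x' (ψ n)‖ • (v n - w) := by
        rw [hv]; rw [smul_sub, smul_smul]
        rw [mul_inv_cancel₀ (ne_of_gt (hpos n)), one_smul]
      rw [h2, norm_smul, norm_norm] at h1
      have h3 := hupp (ψ n)
      have h5 : 1/(((ψ n):ℝ)+1) ≤ 1 := by
        rw [div_le_one (by positivity)]; linarith [(by positivity : (0:ℝ) ≤ ((ψ n):ℝ))]
      have h6 := hpos n
      have key : ‖x' (ψ n)‖ - 1 ≤ ‖x' (ψ n)‖ * ‖v n - w‖ := by linarith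
      have key2 : (‖x' (ψ n)‖ - 1)/‖x' (ψ n)‖ ≤ ‖v n - w‖ :=
        (div_le_iff₀ h6).mpr (by linarith [key])
      have key3 : (‖x' (ψ n)‖ - 1)/‖x' (ψ n)‖ = 1 - 1/‖x' (ψ n)‖ := by
        field_simp
      have key4 : 1/‖x' (ψ n)‖ ≤ 1/((n:ℝ)+1) := by
        apply div_le_div_of_nonneg_left (by norm_num) (by positivity) (le_of_lt (hψ' n))
      rw [key3] at key2
      linarith
    have hcontra : Tendsto (fun n => ‖v (φ n) - w‖) atTop (𝓝 0) := by
      have := hvφ.sub (tendsto_const_nhds (x := w))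
      simpa using this.norm
    rw [Metric.tendsto_atTop] at hcontra
    obtain ⟨M, hM⟩ := hcontra (1/2) (by norm_num)
    have h7 := hM (max M 1) (le_max_left _ _)
    have h8 := hfar (φ (max M 1))
    have h9 : (1:ℝ) ≤ φ (max M 1) := by
      have : max M 1 ≤ φ (max M 1) := hφ.le_apply
      have : (1:ℕ) ≤ φ (max M 1) := le_trans (le_max_right M 1) this
      exact_mod_cast this
    have h10 : 1 - 1/(((φ (max M 1)):ℝ)+1) ≥ 1/2 := by
      have : ((φ (max M 1)):ℝ) + 1 ≥ 2 := by linarith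
      have h11 : 1/(((φ (max M 1)):ℝ)+1) ≤ 1/2 := by
        apply div_le_div_of_nonneg_left (by norm_num) (by norm_num) this
      linarith
    rw [Real.dist_0_eq_abs, abs_of_nonneg (norm_nonneg _)] at h7
    linarith

lemma not_compactOperator_of_separated (K : B →L[ℂ] B) (x : ℕ → B) (hx : ∀ n, ‖x n‖ ≤ 1)
    {δ : ℝ} (hδ : 0 < δ) (hsep : ∀ m n, m < n → δ ≤ ‖K (x n) - K (x m)‖) :
    ¬ IsCompactOperator (K : B → B) := by
  intro hK
  obtain ⟨z, φ, hφ, hz⟩ := exists_subseq_tendsto K hK x hx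
  rw [Metric.tendsto_atTop] at hz
  obtain ⟨N, hN⟩ := hz (δ/2) (by linarith)
  have h1 := hN N le_rfl
  have h2 := hN (N+1) (by omega)
  have hlt : φ N < φ (N+1) := hφ (by omega)
  have := hsep (φ N) (φ (N+1)) hlt
  have : δ ≤ dist (K (x (φ (N+1)))) (K (x (φ N))) := by
    simpa [dist_eq_norm] using this
  have := dist_triangle (K (x (φ (N+1)))) z (K (x (φ N)))
  rw [dist_comm z (K (x (φ N)))] at this
  linarith [h1, h2, dist_comm (K (x (φ (N+1)))) z ▸ h2]

lemma finiteDimensional_ker (G K : B →L[ℂ] B) (hG : IsUnit G) (hK : IsCompactOperator K) :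
    FiniteDimensional ℂ (LinearMap.ker (G + K).toLinearMap) := by
  set V := LinearMap.ker (G + K).toLinearMap with hV
  set Gi : B →L[ℂ] B := ((hG.unit⁻¹ : (B →L[ℂ] B)ˣ) : B →L[ℂ] B) with hGi
  set L : B →L[ℂ] B := -(Gi.comp K) with hL
  have hLc : IsCompactOperator (L : B → B) := (hK.clm_comp Gi).neg
  have hfix : ∀ x ∈ V, L x = x := by
    intro x hx
    have hx' : G x + K x = 0 := by
      simpa [ContinuousLinearMap.add_apply] using (LinearMap.mem_ker.mp hx)
    have hKx : K x = -(G x) := by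
      rw [eq_neg_iff_add_eq_zero, add_comm]; exact hx'
    have h1 : L x = Gi (G x) := by
      simp [hL, ContinuousLinearMap.comp_apply, hKx]
    have h2 : Gi (G x) = x := by
      have h3 : Gi * G = 1 := by
        have := congrArg (Units.val) (inv_mul_cancel hG.unit)
        simpa [hGi, hG.unit_spec] using this
      calc Gi (G x) = (Gi * G) x := (ContinuousLinearMap.mul_apply _ _ _).symm
        _ = x := by rw [h3]; simp
    rw [h1, h2]
  -- the closed unit ball of V is compact
  have hC := hLc.isCompact_closure_image_closedBall (𝕜₁ := ℂ) (f := (L : B →ₗ[ℂ] B)) 1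
  have hS : IsCompact ((V : Set B) ∩ closedBall (0:B) 1) := by
    apply hC.of_isClosed_subset ((ContinuousLinearMap.isClosed_ker (G+K)).inter Metric.isClosed_closedBall)
    rintro x ⟨hxV, hxb⟩
    exact subset_closure ⟨x, hxb, hfix x hxV⟩
  have hball : IsCompact (closedBall (0 : V) 1) := by
    rw [Topology.IsEmbedding.isCompact_iff (Topology.IsEmbedding.subtypeVal)]
    have : (Subtype.val '' (closedBall (0 : V) 1)) = (V : Set B) ∩ closedBall (0:B) 1 := by
      ext x
      constructor
      · rintro ⟨v, hv, rfl⟩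
        exact ⟨v.2, by simpa [mem_closedBall, dist_zero_right] using
          (by simpa [mem_closedBall, dist_zero_right] using hv : ‖v‖ ≤ 1)⟩
      · rintro ⟨hxV, hxb⟩
        exact ⟨⟨x, hxV⟩, by simpa [mem_closedBall, dist_zero_right] using
          (by simpa [mem_closedBall, dist_zero_right] using hxb : ‖x‖ ≤ 1), rfl⟩
    rw [this]
    exact hS
  exact FiniteDimensional.of_isCompact_closedBall₀ ℂ one_pos hball

-- Riesz-lemma separation point inside a subspace V, away from F
lemma exists_norm_one_sep (F V : Submodule ℂ B) (hFV : F ≤ V) (hF : IsClosed (F : Set B))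
    (hlt : ¬ (V ≤ F)) :
    ∃ x : B, x ∈ V ∧ ‖x‖ = 1 ∧ ∀ y ∈ F, (1:ℝ)/2 ≤ ‖x - y‖ := by
  set F' : Submodule ℂ V := F.comap V.subtype with hF'def
  have hF'c : IsClosed (F' : Set V) := by
    have : (F' : Set V) = (Subtype.val) ⁻¹' (F : Set B) := rfl
    rw [this]
    exact hF.preimage continuous_subtype_val
  have hex : ∃ x : V, x ∉ F' := by
    rw [SetLike.not_le_iff_exists] at hlt
    obtain ⟨v, hvV, hvF⟩ := hlt
    exact ⟨⟨v, hvV⟩, fun h => hvF h⟩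
  obtain ⟨x₀, hx₀F, hx₀⟩ := riesz_lemma hF'c hex (show (2:ℝ)/3 < 1 by norm_num)
  have hx₀ne : ‖(x₀ : B)‖ ≠ 0 := by
    intro h
    apply hx₀F
    have : (x₀ : B) = 0 := norm_eq_zero.mp h
    have hx0 : x₀ = 0 := Subtype.ext this
    rw [hx0]; exact F'.zero_mem
  have hx₀pos : 0 < ‖(x₀ : B)‖ := lt_of_le_of_ne (norm_nonneg _) (Ne.symm hx₀ne)
  refine ⟨(‖(x₀:B)‖⁻¹ : ℝ) • (x₀ : B), V.smul_of_tower_mem _ x₀.2, ?_, ?_⟩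
  · rw [norm_smul, norm_inv, norm_norm]
    exact inv_mul_cancel₀ hx₀ne
  · intro y hy
    have hyV : y ∈ V := hFV hy
    have hyF' : (⟨y, hyV⟩ : V) ∈ F' := hy
    have hkey := hx₀ (‖(x₀:B)‖ • (⟨y, hyV⟩ : V)) (F'.smul_of_tower_mem _ hyF')
    have hnorm : ‖x₀ - ‖(x₀:B)‖ • (⟨y, hyV⟩ : V)‖ = ‖(x₀:B) - ‖(x₀:B)‖ • y‖ := rfl
    rw [hnorm] at hkey
    have heq : (‖(x₀:B)‖⁻¹ : ℝ) • (x₀ : B) - y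
        = (‖(x₀:B)‖⁻¹ : ℝ) • ((x₀:B) - ‖(x₀:B)‖ • y) := by
      rw [smul_sub, smul_smul, inv_mul_cancel₀ hx₀ne, one_smul]
    rw [heq, norm_smul, norm_inv, norm_norm]
    have hcoe : ‖x₀‖ = ‖(x₀:B)‖ := rfl
    rw [hcoe] at hkey
    calc (1:ℝ)/2 ≤ 2/3 := by norm_num
      _ = ‖(x₀:B)‖⁻¹ * (2/3 * ‖(x₀:B)‖) := by field_simp
      _ ≤ ‖(x₀:B)‖⁻¹ * ‖(x₀:B) - ‖(x₀:B)‖ • y‖ :=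
          mul_le_mul_of_nonneg_left hkey (inv_pos.mpr hx₀pos).le


section Chain

variable (Φ : B →L[ℂ] B)

lemma ker_pow_mono {a b : ℕ} (h : a ≤ b) :
    LinearMap.ker (Φ^a).toLinearMap ≤ LinearMap.ker (Φ^b).toLinearMap := by
  intro x hx
  obtain ⟨c, rfl⟩ := Nat.exists_eq_add_of_le h
  rw [LinearMap.mem_ker, ContinuousLinearMap.coe_coe] at hx ⊢
  rw [add_comm, pow_add, ContinuousLinearMap.mul_apply, hx, map_zero]

lemma range_pow_anti {a b : ℕ} (h : a ≤ b) :
    LinearMap.range (Φ^b).toLinearMap ≤ LinearMap.range (Φ^a).toLinearMap := by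
  rintro x ⟨u, rfl⟩
  obtain ⟨c, rfl⟩ := Nat.exists_eq_add_of_le h
  exact ⟨(Φ^c) u, by rw [ContinuousLinearMap.coe_coe, ContinuousLinearMap.coe_coe, pow_add, ContinuousLinearMap.mul_apply]⟩

lemma ker_stab_of_step {n : ℕ} (h : LinearMap.ker (Φ^(n+1)).toLinearMap ≤ LinearMap.ker (Φ^n).toLinearMap) :
    ∀ m, n ≤ m → LinearMap.ker (Φ^m).toLinearMap = LinearMap.ker (Φ^n).toLinearMap := by
  intro m hm
  obtain ⟨c, rfl⟩ := Nat.exists_eq_add_of_le hm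
  induction c with
  | zero => rfl
  | succ c ih =>
    apply le_antisymm _ (ker_pow_mono Φ (by omega))
    intro x hx
    rw [← ih (by omega)]
    rw [LinearMap.mem_ker, ContinuousLinearMap.coe_coe] at hx ⊢
    have e0 : n + (c+1) = (n+1) + c := by omega
    have h1 : Φ^(n + (c+1)) = Φ^(n+1) * Φ^c := by rw [e0, pow_add]
    have h2 : Φ^(n + c) = Φ^n * Φ^c := by rw [pow_add]
    rw [h1, ContinuousLinearMap.mul_apply] at hx
    rw [h2, ContinuousLinearMap.mul_apply]
    exact LinearMap.mem_ker.mp (h (LinearMap.mem_ker.mpr hx))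

lemma range_stab_of_step {n : ℕ} (h : LinearMap.range (Φ^n).toLinearMap ≤ LinearMap.range (Φ^(n+1)).toLinearMap) :
    ∀ m, n ≤ m → LinearMap.range (Φ^m).toLinearMap = LinearMap.range (Φ^n).toLinearMap := by
  intro m hm
  obtain ⟨c, rfl⟩ := Nat.exists_eq_add_of_le hm
  induction c with
  | zero => rfl
  | succ c ih =>
    have ihe := ih (by omega)
    apply le_antisymm (range_pow_anti Φ (by omega))
    intro x hx
    rw [← ihe] at hx
    obtain ⟨u, hu⟩ := hx
    obtain ⟨v, hv⟩ := h (⟨u, rfl⟩ : (Φ^n) u ∈ LinearMap.range (Φ^n).toLinearMap)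
    refine ⟨v, ?_⟩
    have e1 : n + (c+1) = c + (n+1) := by omega
    have e2 : n + c = c + n := by omega
    calc (Φ^(n+(c+1))) v = (Φ^c) ((Φ^(n+1)) v) := by
          rw [e1, pow_add, ContinuousLinearMap.mul_apply]
      _ = (Φ^c) ((Φ^n) u) := by simp only [ContinuousLinearMap.coe_coe] at hv; rw [hv]
      _ = (Φ^(n+c)) u := by rw [e2, pow_add, ContinuousLinearMap.mul_apply]
      _ = x := hu

variable {A K' : B →L[ℂ] B} {μ' : ℂ}

lemma isUnit_sub_smul_one [CompleteSpace B] (hμ' : μ' ≠ 0) (hA : ‖A‖ ≤ ‖μ'‖/8) :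
    IsUnit (A - μ' • (1 : B →L[ℂ] B)) := by
  have hμpos : 0 < ‖μ'‖ := norm_pos_iff.mpr hμ'
  have hnorm : ‖μ'⁻¹ • A‖ < 1 := by
    rw [norm_smul μ'⁻¹ A, norm_inv]
    have h1 : ‖μ'‖⁻¹ * ‖A‖ ≤ ‖μ'‖⁻¹ * (‖μ'‖/8) :=
      mul_le_mul_of_nonneg_left hA (by positivity)
    have h2 : ‖μ'‖⁻¹ * (‖μ'‖/8) = 1/8 := by
      have h : ‖μ'‖ ≠ 0 := norm_ne_zero_iff.mpr hμ'
      rw [← mul_div_assoc, inv_mul_cancel₀ h]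
    rw [h2] at h1
    linarith
  set u := Units.oneSub (μ'⁻¹ • A) hnorm with hu
  have hval : (u : B →L[ℂ] B) = 1 - μ'⁻¹ • A := rfl
  have heq : A - μ' • (1 : B →L[ℂ] B) = ((-μ') • (1 : B →L[ℂ] B)) * (u : B →L[ℂ] B) := by
    rw [smul_mul_assoc, one_mul, hval, smul_sub, smul_smul]
    have h3 : (-μ') * μ'⁻¹ = -1 := by field_simp
    rw [h3]
    simp only [neg_smul, one_smul, sub_neg_eq_add]
    abel
  rw [heq]
  apply IsUnit.mul _ u.isUnit
  have h4 : ((-μ') • (1 : B →L[ℂ] B)) = algebraMap ℂ (B →L[ℂ] B) (-μ') :=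
    (Algebra.algebraMap_eq_smul_one _).symm
  rw [h4]
  exact (isUnit_iff_ne_zero.mpr (neg_ne_zero.mpr hμ')).map (algebraMap ℂ (B →L[ℂ] B))

lemma pow_rep (hrep : Φ = A + K' - μ' • (1 : B →L[ℂ] B)) (hK' : IsCompactOperator (K' : B → B))
    (n : ℕ) :
    ∃ C : B →L[ℂ] B, IsCompactOperator (C : B → B) ∧
      Φ^n = (A - μ' • (1 : B →L[ℂ] B))^n + C := by
  induction n with
  | zero => exact ⟨0, isCompactOperator_zero, by simp⟩
  | succ n ih =>
    obtain ⟨C, hC, hCe⟩ := ih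
    refine ⟨(A - μ' • (1 : B →L[ℂ] B))^n * K' + C * Φ, ?_, ?_⟩
    · apply IsCompactOperator.add
      · exact hK'.clm_comp ((A - μ' • (1 : B →L[ℂ] B))^n)
      · exact hC.comp_clm Φ
    · have hΦ : Φ = (A - μ' • (1 : B →L[ℂ] B)) + K' := by rw [hrep]; abel
      calc Φ^(n+1) = Φ^n * Φ := pow_succ Φ n
        _ = ((A - μ' • (1 : B →L[ℂ] B))^n + C) * Φ := by rw [hCe]
        _ = (A - μ' • (1 : B →L[ℂ] B))^n * Φ + C * Φ := by rw [add_mul]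
        _ = (A - μ' • (1 : B →L[ℂ] B))^n * ((A - μ' • (1 : B →L[ℂ] B)) + K') + C * Φ := by
            rw [← hΦ]
        _ = (A - μ' • (1 : B →L[ℂ] B))^(n+1) +
              ((A - μ' • (1 : B →L[ℂ] B))^n * K' + C * Φ) := by
            rw [mul_add, ← pow_succ]; abel

lemma pow_ker_fd [CompleteSpace B] (hrep : Φ = A + K' - μ' • (1 : B →L[ℂ] B))
    (hK' : IsCompactOperator (K' : B → B)) (hμ' : μ' ≠ 0) (hA : ‖A‖ ≤ ‖μ'‖/8) (n : ℕ) :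
    FiniteDimensional ℂ (LinearMap.ker (Φ^n).toLinearMap) := by
  obtain ⟨C, hC, hCe⟩ := pow_rep Φ hrep hK' n
  rw [hCe]
  exact finiteDimensional_ker _ _ ((isUnit_sub_smul_one hμ' hA).pow n) hC

lemma pow_range_closed [CompleteSpace B] (hrep : Φ = A + K' - μ' • (1 : B →L[ℂ] B))
    (hK' : IsCompactOperator (K' : B → B)) (hμ' : μ' ≠ 0) (hA : ‖A‖ ≤ ‖μ'‖/8) (n : ℕ) :
    IsClosed ((LinearMap.range (Φ^n).toLinearMap) : Set B) := by
  obtain ⟨C, hC, hCe⟩ := pow_rep Φ hrep hK' n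
  rw [hCe]
  exact isClosed_range _ _ ((isUnit_sub_smul_one hμ' hA).pow n) hC

lemma apply_eq (hrep : Φ = A + K' - μ' • (1 : B →L[ℂ] B)) (z : B) :
    K' z = Φ z + μ' • z - A z := by
  rw [hrep]
  simp only [ContinuousLinearMap.sub_apply, ContinuousLinearMap.add_apply,
    ContinuousLinearMap.smul_apply, ContinuousLinearMap.one_apply]
  abel

lemma ker_chain_stab [CompleteSpace B] (hrep : Φ = A + K' - μ' • (1 : B →L[ℂ] B))
    (hK' : IsCompactOperator (K' : B → B)) (hμ' : μ' ≠ 0) (hA : ‖A‖ ≤ ‖μ'‖/8) :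
    ∃ p, ∀ m, p ≤ m → LinearMap.ker (Φ^m).toLinearMap = LinearMap.ker (Φ^p).toLinearMap := by
  by_cases hex : ∃ n, LinearMap.ker (Φ^(n+1)).toLinearMap ≤ LinearMap.ker (Φ^n).toLinearMap
  · obtain ⟨n, hn⟩ := hex
    exact ⟨n, ker_stab_of_step Φ hn⟩
  · exfalso
    push_neg at hex
    have hμpos : 0 < ‖μ'‖ := norm_pos_iff.mpr hμ'
    have hsel : ∀ n : ℕ, ∃ x : B, x ∈ LinearMap.ker (Φ^(n+1)).toLinearMap ∧ ‖x‖ = 1 ∧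
        ∀ y ∈ LinearMap.ker (Φ^n).toLinearMap, (1:ℝ)/2 ≤ ‖x - y‖ := by
      intro n
      exact exists_norm_one_sep _ _ (ker_pow_mono Φ (by omega))
        (ContinuousLinearMap.isClosed_ker _) (hex n)
    choose x hxV hxn hxsep using hsel
    have hΦx : ∀ n, Φ (x n) ∈ LinearMap.ker (Φ^n).toLinearMap := by
      intro n
      rw [LinearMap.mem_ker, ContinuousLinearMap.coe_coe, ← ContinuousLinearMap.mul_apply, ← pow_succ]
      exact LinearMap.mem_ker.mp (hxV n)
    have hsep : ∀ m n, m < n → ‖μ'‖/4 ≤ ‖K' (x n) - K' (x m)‖ := by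
      intro m n hmn
      set y := x m + μ'⁻¹ • (Φ (x m) - Φ (x n)) with hy
      have hyk : y ∈ LinearMap.ker (Φ^n).toLinearMap := by
        apply Submodule.add_mem
        · exact ker_pow_mono Φ (by omega) (hxV m)
        · apply Submodule.smul_mem
          apply Submodule.sub_mem
          · exact ker_pow_mono Φ (by omega) (hΦx m)
          · exact hΦx n
      have hid : K' (x n) - K' (x m) = μ' • (x n - y) - (A (x n) - A (x m)) := by
        rw [apply_eq Φ hrep, apply_eq Φ hrep, hy]
        rw [smul_sub, smul_add, smul_smul, mul_inv_cancel₀ hμ', one_smul]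
        abel
      rw [hid]
      have h1 : ‖μ'‖/2 ≤ ‖μ' • (x n - y)‖ := by
        rw [norm_smul]
        calc ‖μ'‖/2 = ‖μ'‖ * (1/2) := by ring
          _ ≤ ‖μ'‖ * ‖x n - y‖ :=
            mul_le_mul_of_nonneg_left (hxsep n y hyk) (norm_nonneg μ')
      have h2 : ‖A (x n) - A (x m)‖ ≤ ‖μ'‖/4 := by
        have hb : ∀ i, ‖A (x i)‖ ≤ ‖μ'‖/8 := by
          intro i
          calc ‖A (x i)‖ ≤ ‖A‖ * ‖x i‖ := A.le_opNorm _
            _ = ‖A‖ := by rw [hxn i, mul_one]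
            _ ≤ ‖μ'‖/8 := hA
        calc ‖A (x n) - A (x m)‖ ≤ ‖A (x n)‖ + ‖A (x m)‖ := norm_sub_le _ _
          _ ≤ ‖μ'‖/8 + ‖μ'‖/8 := add_le_add (hb n) (hb m)
          _ = ‖μ'‖/4 := by ring
      calc (‖μ'‖:ℝ)/4 = ‖μ'‖/2 - ‖μ'‖/4 := by ring
        _ ≤ ‖μ' • (x n - y)‖ - ‖A (x n) - A (x m)‖ := by
            apply sub_le_sub h1 h2
        _ ≤ ‖μ' • (x n - y) - (A (x n) - A (x m))‖ := norm_sub_norm_le _ _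
    exact not_compactOperator_of_separated K' x (fun n => le_of_eq (hxn n))
      (by positivity) hsep hK'

lemma range_chain_stab [CompleteSpace B] (hrep : Φ = A + K' - μ' • (1 : B →L[ℂ] B))
    (hK' : IsCompactOperator (K' : B → B)) (hμ' : μ' ≠ 0) (hA : ‖A‖ ≤ ‖μ'‖/8) :
    ∃ p, ∀ m, p ≤ m → LinearMap.range (Φ^m).toLinearMap = LinearMap.range (Φ^p).toLinearMap := by
  by_cases hex : ∃ n, LinearMap.range (Φ^n).toLinearMap ≤ LinearMap.range (Φ^(n+1)).toLinearMap
  · obtain ⟨n, hn⟩ := hex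
    exact ⟨n, range_stab_of_step Φ hn⟩
  · exfalso
    push_neg at hex
    have hμpos : 0 < ‖μ'‖ := norm_pos_iff.mpr hμ'
    have hsel : ∀ n : ℕ, ∃ x : B, x ∈ LinearMap.range (Φ^n).toLinearMap ∧ ‖x‖ = 1 ∧
        ∀ y ∈ LinearMap.range (Φ^(n+1)).toLinearMap, (1:ℝ)/2 ≤ ‖x - y‖ := by
      intro n
      exact exists_norm_one_sep _ _ (range_pow_anti Φ (by omega))
        (pow_range_closed Φ hrep hK' hμ' hA (n+1)) (hex n)
    choose x hxV hxn hxsep using hsel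
    have hΦx : ∀ n, Φ (x n) ∈ LinearMap.range (Φ^(n+1)).toLinearMap := by
      intro n
      obtain ⟨u, hu⟩ := hxV n
      exact ⟨u, by simp only [ContinuousLinearMap.coe_coe] at hu ⊢; rw [pow_succ', ContinuousLinearMap.mul_apply, hu]⟩
    have hsep : ∀ m n, m < n → ‖μ'‖/4 ≤ ‖K' (x n) - K' (x m)‖ := by
      intro m n hmn
      set y := x n + μ'⁻¹ • (Φ (x n) - Φ (x m)) with hy
      have hyk : y ∈ LinearMap.range (Φ^(m+1)).toLinearMap := by
        apply Submodule.add_mem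
        · exact range_pow_anti Φ (by omega) (hxV n)
        · apply Submodule.smul_mem
          apply Submodule.sub_mem
          · exact range_pow_anti Φ (by omega) (hΦx n)
          · exact hΦx m
      have hid : K' (x m) - K' (x n) = μ' • (x m - y) - (A (x m) - A (x n)) := by
        rw [apply_eq Φ hrep, apply_eq Φ hrep, hy]
        rw [smul_sub, smul_add, smul_smul, mul_inv_cancel₀ hμ', one_smul]
        abel
      rw [norm_sub_rev, hid]
      have h1 : ‖μ'‖/2 ≤ ‖μ' • (x m - y)‖ := by
        rw [norm_smul]
        calc ‖μ'‖/2 = ‖μ'‖ * (1/2) := by ring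
          _ ≤ ‖μ'‖ * ‖x m - y‖ :=
            mul_le_mul_of_nonneg_left (hxsep m y hyk) (norm_nonneg μ')
      have h2 : ‖A (x m) - A (x n)‖ ≤ ‖μ'‖/4 := by
        have hb : ∀ i, ‖A (x i)‖ ≤ ‖μ'‖/8 := by
          intro i
          calc ‖A (x i)‖ ≤ ‖A‖ * ‖x i‖ := A.le_opNorm _
            _ = ‖A‖ := by rw [hxn i, mul_one]
            _ ≤ ‖μ'‖/8 := hA
        calc ‖A (x m) - A (x n)‖ ≤ ‖A (x m)‖ + ‖A (x n)‖ := norm_sub_le _ _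
          _ ≤ ‖μ'‖/8 + ‖μ'‖/8 := add_le_add (hb m) (hb n)
          _ = ‖μ'‖/4 := by ring
      calc (‖μ'‖:ℝ)/4 = ‖μ'‖/2 - ‖μ'‖/4 := by ring
        _ ≤ ‖μ' • (x m - y)‖ - ‖A (x m) - A (x n)‖ := by
            apply sub_le_sub h1 h2
        _ ≤ ‖μ' • (x m - y) - (A (x m) - A (x n))‖ := norm_sub_norm_le _ _
    exact not_compactOperator_of_separated K' x (fun n => le_of_eq (hxn n))
      (by positivity) hsep hK'

lemma decomp_disjoint (p : ℕ) (hk : LinearMap.ker (Φ^(p+p)).toLinearMap = LinearMap.ker (Φ^p).toLinearMap) :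
    ∀ z : B, z ∈ LinearMap.ker (Φ^p).toLinearMap → z ∈ LinearMap.range (Φ^p).toLinearMap → z = 0 := by
  intro z hzk hzr
  obtain ⟨u, hu⟩ := hzr
  have h1 : u ∈ LinearMap.ker (Φ^(p+p)).toLinearMap := by
    rw [LinearMap.mem_ker, ContinuousLinearMap.coe_coe, pow_add, ContinuousLinearMap.mul_apply, ← ContinuousLinearMap.coe_coe (Φ^p), hu]
    exact LinearMap.mem_ker.mp hzk
  rw [hk] at h1
  rw [← hu]
  exact LinearMap.mem_ker.mp h1

lemma decomp_sum (p : ℕ) (hr : LinearMap.range (Φ^(p+p)).toLinearMap = LinearMap.range (Φ^p).toLinearMap) :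
    ∀ x : B, ∃ a b : B, a ∈ LinearMap.ker (Φ^p).toLinearMap ∧ b ∈ LinearMap.range (Φ^p).toLinearMap ∧ x = a + b := by
  intro x
  have h1 : (Φ^p) x ∈ LinearMap.range (Φ^(p+p)).toLinearMap := by
    rw [hr]; exact ⟨x, rfl⟩
  obtain ⟨u, hu⟩ := h1
  refine ⟨x - (Φ^p) u, (Φ^p) u, ?_, ⟨u, rfl⟩, by abel⟩
  rw [LinearMap.mem_ker, map_sub]
  have h2 : (Φ ^ p) ((Φ ^ p) u) = (Φ ^ (p + p)) u := by
    rw [pow_add, ContinuousLinearMap.mul_apply]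
  rw [ContinuousLinearMap.coe_coe, h2, ← ContinuousLinearMap.coe_coe (Φ^(p+p)), hu, sub_self]

end Chain

section SupClosed

lemma isClosed_span_singleton_sup (R : Submodule ℂ B) (hR : IsClosed (R : Set B)) (v : B) :
    IsClosed ((Submodule.span ℂ {v} ⊔ R : Submodule ℂ B) : Set B) := by
  by_cases hv : v ∈ R
  · have : Submodule.span ℂ {v} ⊔ R = R := by
      rw [sup_eq_right]
      rw [Submodule.span_le, Set.singleton_subset_iff]
      exact hv
    rw [this]; exact hR
  · have hRne : (R : Set B).Nonempty := ⟨0, R.zero_mem⟩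
    have hd : 0 < infDist v R := by
      rcases lt_or_eq_of_le (infDist_nonneg (s := (R : Set B)) (x := v)) with h | h
      · exact h
      · exfalso; exact hv ((hR.mem_iff_infDist_zero hRne).mpr h.symm)
    set d := infDist v (R : Set B) with hdd
    -- coefficient bound: for c : ℂ, r ∈ R : |c| * d ≤ ‖c • v + r‖
    have hcoef : ∀ (c : ℂ) (r : B), r ∈ R → ‖c‖ * d ≤ ‖c • v + r‖ := by
      intro c r hr
      by_cases hc : c = 0
      · simp [hc, hd.le, norm_nonneg]
      · have h1 : d ≤ ‖v - (-(c⁻¹ • r))‖ := by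
          rw [← dist_eq_norm]
          exact infDist_le_dist_of_mem (R.neg_mem (R.smul_mem _ hr))
        have h2 : c • (v - (-(c⁻¹ • r))) = c • v + r := by
          rw [smul_sub, smul_neg, smul_smul, mul_inv_cancel₀ hc, one_smul]
          abel
        calc ‖c‖ * d ≤ ‖c‖ * ‖v - (-(c⁻¹ • r))‖ :=
              mul_le_mul_of_nonneg_left h1 (norm_nonneg c)
          _ = ‖c • (v - (-(c⁻¹ • r)))‖ := (norm_smul _ _).symm
          _ = ‖c • v + r‖ := by rw [h2]
    apply IsSeqClosed.isClosed
    intro u x hu hux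
    -- decompose u n = c n • v + r n
    have hdec : ∀ n, ∃ (c : ℂ) (r : B), r ∈ R ∧ u n = c • v + r := by
      intro n
      have := hu n
      rw [SetLike.mem_coe, Submodule.mem_sup] at this
      obtain ⟨a, ha, b, hb, hab⟩ := this
      rw [Submodule.mem_span_singleton] at ha
      obtain ⟨c, rfl⟩ := ha
      exact ⟨c, b, hb, hab.symm⟩
    choose c r hrR hur using hdec
    have hcC : CauchySeq c := by
      rw [Metric.cauchySeq_iff]
      intro ε hε
      have hcu : CauchySeq u := hux.cauchySeq
      rw [Metric.cauchySeq_iff] at hcu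
      obtain ⟨N, hN⟩ := hcu (ε * d) (by positivity)
      refine ⟨N, fun m hm n hn => ?_⟩
      have h3 : ‖c m - c n‖ * d ≤ ‖(c m - c n) • v + (r m - r n)‖ :=
        hcoef _ _ (R.sub_mem (hrR m) (hrR n))
      have h4 : (c m - c n) • v + (r m - r n) = u m - u n := by
        rw [hur m, hur n, sub_smul]; abel
      rw [h4] at h3
      have h5 : ‖u m - u n‖ < ε * d := by
        rw [← dist_eq_norm]; exact hN m hm n hn
      rw [dist_eq_norm]
      by_contra hcon
      push_neg at hcon
      have : ε * d ≤ ‖c m - c n‖ * d := mul_le_mul_of_nonneg_right hcon hd.le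
      linarith
    obtain ⟨cl, hcl⟩ := cauchySeq_tendsto_of_complete hcC
    have hrlim : Tendsto r atTop (𝓝 (x - cl • v)) := by
      have h6 : ∀ n, r n = u n - c n • v := by
        intro n; rw [hur n]; abel
      have h7 : Tendsto (fun n => u n - c n • v) atTop (𝓝 (x - cl • v)) :=
        hux.sub ((hcl.smul_const v))
      exact h7.congr (fun n => (h6 n).symm)
    have hxR : x - cl • v ∈ R := hR.mem_of_tendsto hrlim (Eventually.of_forall hrR)
    rw [SetLike.mem_coe, Submodule.mem_sup]
    exact ⟨cl • v, Submodule.smul_mem _ _ (Submodule.mem_span_singleton_self v),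
      x - cl • v, hxR, by abel⟩

lemma isClosed_fd_sup (W R : Submodule ℂ B) (hW : FiniteDimensional ℂ W)
    (hR : IsClosed (R : Set B)) :
    IsClosed ((W ⊔ R : Submodule ℂ B) : Set B) := by
  have hfg : W.FG := (Module.Finite.iff_fg).mp hW
  obtain ⟨S, hS⟩ := hfg
  rw [← hS]
  clear hS hW
  classical
  induction S using Finset.induction_on generalizing R with
  | empty => simpa using hR
  | insert a S hnot ih =>
    rw [Finset.coe_insert, Submodule.span_insert, sup_assoc]
    exact isClosed_span_singleton_sup _ (ih R hR) a

end SupClosed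

section Extract

lemma eventually_pow_norm_small [CompleteSpace B] (V : B →L[ℂ] B) {r M : ℝ} (hr : 0 < r)
    (hrM : r < M) (hV : spectralRadius ℂ V < ENNReal.ofReal r) :
    ∀ᶠ j : ℕ in atTop, 1 ≤ j → ‖V^j‖ ≤ M^j/8 := by
  have hM : 0 < M := lt_trans hr hrM
  have key : ∀ᶠ j : ℕ in atTop, 1 ≤ j → ‖V^j‖ < r^j := by
    have hg := spectrum.pow_norm_pow_one_div_tendsto_nhds_spectralRadius V
    have hev := hg.eventually_lt_const hV
    filter_upwards [hev] with n hn hn1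
    have hn0 : (n:ℝ) ≠ 0 := by positivity
    rw [ENNReal.ofReal_lt_ofReal_iff hr] at hn
    have h0 : (0:ℝ) ≤ ‖V^n‖^(1/(n:ℝ)) := Real.rpow_nonneg (norm_nonneg _) _
    have hpow : (‖V^n‖^(1/(n:ℝ)))^n < r^n := pow_lt_pow_left₀ hn h0 (by omega)
    have heq : (‖V^n‖^(1/(n:ℝ)))^n = ‖V^n‖ := by
      rw [← Real.rpow_natCast (‖V^n‖^(1/(n:ℝ))) n, ← Real.rpow_mul (norm_nonneg _),
        one_div, inv_mul_cancel₀ hn0, Real.rpow_one]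
    rwa [heq] at hpow
  have key2 : ∀ᶠ j : ℕ in atTop, r^j ≤ M^j/8 := by
    have hlt1 : r/M < 1 := (div_lt_one hM).mpr hrM
    have h0 : (0:ℝ) ≤ r/M := by positivity
    have := tendsto_pow_atTop_nhds_zero_of_lt_one h0 hlt1
    have hev := this.eventually_le_const (show (0:ℝ) < 1/8 by norm_num)
    filter_upwards [hev] with j hj
    rw [div_pow] at hj
    rw [div_le_iff₀ (by positivity : (0:ℝ) < M^j)] at hj
    calc r^j ≤ 1/8 * M^j := hj
      _ = M^j/8 := by ring
  filter_upwards [key, key2] with j h1 h2 hj1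
  exact le_trans (h1 hj1).le h2

lemma pow_sub_pow_compact (T K : B →L[ℂ] B) (hK : IsCompactOperator (K : B → B)) (j : ℕ) :
    IsCompactOperator ((T^j - (T - K)^j : B →L[ℂ] B) : B → B) := by
  induction j with
  | zero => simpa using isCompactOperator_zero
  | succ j ih =>
    have heq : T^(j+1) - (T - K)^(j+1) = (T^j - (T - K)^j) * T + (T - K)^j * K := by
      rw [pow_succ, pow_succ]
      rw [sub_mul, mul_sub]
      abel
    rw [heq]
    exact (ih.comp_clm T).add (hK.clm_comp ((T - K)^j))

lemma ker_pow_le_ker_geom (T : B →L[ℂ] B) (μ : ℂ) (j k : ℕ) :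
    LinearMap.ker ((T - μ • (1 : B →L[ℂ] B))^k).toLinearMap ≤
      LinearMap.ker ((T^j - (μ^j) • (1 : B →L[ℂ] B))^k).toLinearMap := by
  have hc : Commute T (μ • (1 : B →L[ℂ] B)) := (Commute.one_right T).smul_right μ
  set S := T - μ • (1 : B →L[ℂ] B) with hS
  set Q := ∑ i ∈ Finset.range j, T^i * (μ • (1 : B →L[ℂ] B))^(j-1-i) with hQ
  have hfac : T^j - (μ^j) • (1 : B →L[ℂ] B) = Q * S := by
    have h1 := hc.geom_sum₂_mul j
    rw [hQ, hS, h1]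
    rw [smul_pow, one_pow]
  have hST : Commute S T := Commute.sub_left (Commute.refl T) hc.symm
  have hS1 : Commute S (μ • (1 : B →L[ℂ] B)) := Commute.sub_left hc (Commute.refl _)
  have hSQ : Commute S Q := by
    apply Commute.sum_right
    intro i _
    exact (hST.pow_right i).mul_right (hS1.pow_right _)
  intro x hx
  rw [LinearMap.mem_ker, ContinuousLinearMap.coe_coe] at hx ⊢
  rw [hfac, hSQ.symm.mul_pow, ContinuousLinearMap.mul_apply, hx, map_zero]

lemma exists_compact_pert [CompleteSpace B] (T : B →L[ℂ] B) {ρ r : ℝ} (hρr : ρ < r) (hr : 0 < r)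
    (h : (⨅ K ∈ {K : B →L[ℂ] B | IsCompactOperator K}, spectralRadius ℂ (T - K))
        ≤ ENNReal.ofReal ρ) :
    ∃ K : B →L[ℂ] B, IsCompactOperator (K : B → B) ∧
      spectralRadius ℂ (T - K) < ENNReal.ofReal r := by
  have hlt : (⨅ K ∈ {K : B →L[ℂ] B | IsCompactOperator K}, spectralRadius ℂ (T - K))
      < ENNReal.ofReal r := by
    apply lt_of_le_of_lt h
    exact ENNReal.ofReal_lt_ofReal_iff hr |>.mpr hρr
  simp only [iInf_lt_iff] at hlt
  obtain ⟨K, hK, hlt'⟩ := hlt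
  exact ⟨K, hK, hlt'⟩

lemma intertwine_pow {B₁ B₂ : Type*} [NormedAddCommGroup B₁] [NormedSpace ℂ B₁]
    [NormedAddCommGroup B₂] [NormedSpace ℂ B₂]
    (ι : B₁ →L[ℂ] B₂) (P₁ : B₁ →L[ℂ] B₁) (P₂ : B₂ →L[ℂ] B₂)
    (h : ∀ x, ι (P₁ x) = P₂ (ι x)) (m : ℕ) (x : B₁) :
    ι ((P₁^m) x) = (P₂^m) (ι x) := by
  induction m with
  | zero => simp
  | succ m ih =>
    rw [pow_succ', pow_succ', ContinuousLinearMap.mul_apply, ContinuousLinearMap.mul_apply]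
    rw [h ((P₁^m) x), ih]

end Extract

end SpecInd

open SpecInd

/-- **Spectral independence of the Banach space** (Baladi–Tsujii, Lemma A.1, nested case).
If `B₁` embeds continuously, injectively and densely into `B₂`, `T` acts boundedly on
both (compatibly with the embedding) and has essential spectral radius `≤ ρ` on both,
then the eigenvalues of modulus `> ρ` on `B₁` and on `B₂` coincide, and the generalized
eigenspaces coincide: every generalized eigenvector in `B₂` already lies in `B₁`. -/
theorem spectral_independence_nested
    {B₁ B₂ : Type*} [NormedAddCommGroup B₁] [NormedSpace ℂ B₁] [CompleteSpace B₁]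
    [NormedAddCommGroup B₂] [NormedSpace ℂ B₂] [CompleteSpace B₂]
    (ι : B₁ →L[ℂ] B₂) (hinj : Function.Injective ι) (hdense : DenseRange ι)
    (T₁ : B₁ →L[ℂ] B₁) (T₂ : B₂ →L[ℂ] B₂)
    (hcomm : ∀ x : B₁, ι (T₁ x) = T₂ (ι x))
    (ρ : ℝ) (hρ : 0 < ρ)
    (h₁ : essSpectralRadius T₁ ≤ ENNReal.ofReal ρ)
    (h₂ : essSpectralRadius T₂ ≤ ENNReal.ofReal ρ) :
    ∀ μ : ℂ, ρ < ‖μ‖ →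
      ((∃ x : B₁, x ≠ 0 ∧ T₁ x = μ • x) ↔ (∃ x : B₂, x ≠ 0 ∧ T₂ x = μ • x)) ∧
      (∀ (k : ℕ) (x : B₂), ((T₂ - μ • (1 : B₂ →L[ℂ] B₂)) ^ k) x = 0 →
        ∃ y : B₁, ι y = x ∧ ((T₁ - μ • (1 : B₁ →L[ℂ] B₁)) ^ k) y = 0) := by
  intro μ hμ
  have hμpos : 0 < ‖μ‖ := lt_trans hρ hμ
  have hμ0 : μ ≠ 0 := norm_pos_iff.mp hμpos
  unfold essSpectralRadius at h₁ h₂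
  -- the main statement: lifting generalized eigenvectors
  have main : ∀ (k : ℕ) (x : B₂), ((T₂ - μ • (1 : B₂ →L[ℂ] B₂)) ^ k) x = 0 →
      ∃ y : B₁, ι y = x ∧ ((T₁ - μ • (1 : B₁ →L[ℂ] B₁)) ^ k) y = 0 := by
    intro k x hx
    set r := (ρ + ‖μ‖)/2 with hrdef
    have hr0 : 0 < r := by positivity
    have hρr : ρ < r := by rw [hrdef]; linarith
    have hrμ : r < ‖μ‖ := by rw [hrdef]; linarith
    obtain ⟨K₁, hK₁c, hK₁⟩ := exists_compact_pert T₁ hρr hr0 h₁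
    obtain ⟨K₂, hK₂c, hK₂⟩ := exists_compact_pert T₂ hρr hr0 h₂
    have hev₁ := eventually_pow_norm_small (T₁ - K₁) hr0 hrμ hK₁
    have hev₂ := eventually_pow_norm_small (T₂ - K₂) hr0 hrμ hK₂
    obtain ⟨j, hj⟩ := ((hev₁.and hev₂).and (eventually_ge_atTop 1)).exists
    obtain ⟨⟨hV₁', hV₂'⟩, hj1⟩ := hj
    have hV₁ := hV₁' hj1
    have hV₂ := hV₂' hj1
    set μ' : ℂ := μ^j with hμ'def
    have hμ'0 : μ' ≠ 0 := pow_ne_zero _ hμ0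
    have hμ'norm : ‖μ'‖ = ‖μ‖^j := by rw [hμ'def, norm_pow]
    -- operators on B₁
    set A₁ := (T₁ - K₁)^j with hA₁def
    set K₁' := T₁^j - (T₁ - K₁)^j with hK₁'def
    set S₁' := T₁^j - μ' • (1 : B₁ →L[ℂ] B₁) with hS₁'def
    have hrep₁ : S₁' = A₁ + K₁' - μ' • (1 : B₁ →L[ℂ] B₁) := by
      rw [hS₁'def, hA₁def, hK₁'def]; abel
    have hK₁'c : IsCompactOperator (K₁' : B₁ → B₁) := pow_sub_pow_compact T₁ K₁ hK₁c j
    have hA₁n : ‖A₁‖ ≤ ‖μ'‖/8 := by rw [hμ'norm]; exact hV₁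
    -- operators on B₂
    set A₂ := (T₂ - K₂)^j with hA₂def
    set K₂' := T₂^j - (T₂ - K₂)^j with hK₂'def
    set S₂' := T₂^j - μ' • (1 : B₂ →L[ℂ] B₂) with hS₂'def
    have hrep₂ : S₂' = A₂ + K₂' - μ' • (1 : B₂ →L[ℂ] B₂) := by
      rw [hS₂'def, hA₂def, hK₂'def]; abel
    have hK₂'c : IsCompactOperator (K₂' : B₂ → B₂) := pow_sub_pow_compact T₂ K₂ hK₂c j
    have hA₂n : ‖A₂‖ ≤ ‖μ'‖/8 := by rw [hμ'norm]; exact hV₂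
    -- stabilization of kernel and range chains
    obtain ⟨p1k, hp1k⟩ := ker_chain_stab S₁' hrep₁ hK₁'c hμ'0 hA₁n
    obtain ⟨p1r, hp1r⟩ := range_chain_stab S₁' hrep₁ hK₁'c hμ'0 hA₁n
    obtain ⟨p2k, hp2k⟩ := ker_chain_stab S₂' hrep₂ hK₂'c hμ'0 hA₂n
    obtain ⟨p2r, hp2r⟩ := range_chain_stab S₂' hrep₂ hK₂'c hμ'0 hA₂n
    set p := p1k + p1r + p2k + p2r + k + 1 with hpdef
    have hker₁ : ∀ m, p ≤ m → LinearMap.ker (S₁'^m).toLinearMap = LinearMap.ker (S₁'^p).toLinearMap :=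
      fun m hm => (hp1k m (by omega)).trans (hp1k p (by omega)).symm
    have hrange₁ : ∀ m, p ≤ m → LinearMap.range (S₁'^m).toLinearMap = LinearMap.range (S₁'^p).toLinearMap :=
      fun m hm => (hp1r m (by omega)).trans (hp1r p (by omega)).symm
    have hker₂ : ∀ m, p ≤ m → LinearMap.ker (S₂'^m).toLinearMap = LinearMap.ker (S₂'^p).toLinearMap :=
      fun m hm => (hp2k m (by omega)).trans (hp2k p (by omega)).symm
    have hrange₂ : ∀ m, p ≤ m → LinearMap.range (S₂'^m).toLinearMap = LinearMap.range (S₂'^p).toLinearMap :=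
      fun m hm => (hp2r m (by omega)).trans (hp2r p (by omega)).symm
    set N₁ := LinearMap.ker (S₁'^p).toLinearMap with hN₁def
    set R₁ := LinearMap.range (S₁'^p).toLinearMap with hR₁def
    set N₂ := LinearMap.ker (S₂'^p).toLinearMap with hN₂def
    set R₂ := LinearMap.range (S₂'^p).toLinearMap with hR₂def
    -- intertwining
    have hcommP : ∀ z, ι ((T₁^j) z) = (T₂^j) (ι z) := intertwine_pow ι T₁ T₂ hcomm j
    have hcommS' : ∀ z, ι (S₁' z) = S₂' (ι z) := by
      intro z
      rw [hS₁'def, hS₂'def]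
      simp only [ContinuousLinearMap.sub_apply, ContinuousLinearMap.smul_apply,
        ContinuousLinearMap.one_apply, map_sub, map_smul]
      rw [hcommP]
    have hcommS'p : ∀ z, ι ((S₁'^p) z) = (S₂'^p) (ι z) := intertwine_pow ι S₁' S₂' hcommS' p
    -- finite dimensionality and closedness
    have fdN₁ : FiniteDimensional ℂ N₁ := pow_ker_fd S₁' hrep₁ hK₁'c hμ'0 hA₁n p
    set W : Submodule ℂ B₂ := Submodule.map (ι : B₁ →ₗ[ℂ] B₂) N₁ with hWdef
    have fdW : FiniteDimensional ℂ W := by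
      haveI := fdN₁
      exact Module.Finite.map N₁ (ι : B₁ →ₗ[ℂ] B₂)
    have hR₂closed : IsClosed ((R₂ : Submodule ℂ B₂) : Set B₂) :=
      pow_range_closed S₂' hrep₂ hK₂'c hμ'0 hA₂n p
    have hWR₂closed : IsClosed ((W ⊔ R₂ : Submodule ℂ B₂) : Set B₂) :=
      isClosed_fd_sup W R₂ fdW hR₂closed
    -- density gives W ⊔ R₂ = ⊤
    have hsub : Set.range (ι : B₁ → B₂) ⊆ ((W ⊔ R₂ : Submodule ℂ B₂) : Set B₂) := by
      rintro _ ⟨v, rfl⟩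
      obtain ⟨a, b, haN, hbR, hab⟩ := decomp_sum S₁' p (hrange₁ (p+p) (by omega)) v
      rw [SetLike.mem_coe, Submodule.mem_sup]
      refine ⟨ι a, Submodule.mem_map_of_mem haN, ι b, ?_, by rw [hab, map_add]⟩
      obtain ⟨u, hu⟩ := hbR
      exact ⟨ι u, by simp only [ContinuousLinearMap.coe_coe] at hu ⊢; rw [← hcommS'p, hu]⟩
    have htop : (W ⊔ R₂ : Submodule ℂ B₂) = ⊤ := by
      rw [Submodule.eq_top_iff']
      intro z
      have hz : z ∈ closure (Set.range (ι : B₁ → B₂)) := hdense z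
      have hz2 : z ∈ closure ((W ⊔ R₂ : Submodule ℂ B₂) : Set B₂) :=
        closure_mono hsub hz
      rwa [hWR₂closed.closure_eq] at hz2
    -- x lies in N₂
    have hxN₂ : x ∈ N₂ := by
      have h1 : x ∈ LinearMap.ker ((T₂ - μ • (1 : B₂ →L[ℂ] B₂))^k).toLinearMap := LinearMap.mem_ker.mpr hx
      have h2 := ker_pow_le_ker_geom T₂ μ j k h1
      exact ker_pow_mono S₂' (by omega : k ≤ p) h2
    -- decompose x along W ⊔ R₂
    have hxmem : x ∈ (W ⊔ R₂ : Submodule ℂ B₂) := htop ▸ Submodule.mem_top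
    rw [Submodule.mem_sup] at hxmem
    obtain ⟨w, hw, s, hs, hws⟩ := hxmem
    obtain ⟨y, hyN₁, rfl⟩ := Submodule.mem_map.mp hw
    have hιyN₂ : (ι : B₁ →ₗ[ℂ] B₂) y ∈ N₂ := by
      rw [hN₂def, LinearMap.mem_ker, ContinuousLinearMap.coe_coe (S₂'^p)]
      have : ((ι : B₁ →ₗ[ℂ] B₂) y : B₂) = ι y := rfl
      rw [this, ← hcommS'p]
      rw [show (S₁'^p) y = 0 from LinearMap.mem_ker.mp hyN₁, map_zero]
    have hsN₂ : s ∈ N₂ := by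
      have : s = x - (ι : B₁ →ₗ[ℂ] B₂) y := by rw [← hws]; abel
      rw [this]
      exact N₂.sub_mem hxN₂ hιyN₂
    have hs0 : s = 0 := decomp_disjoint S₂' p (hker₂ (p+p) (by omega)) s hsN₂ hs
    have hxy : ι y = x := by rw [← hws, hs0, add_zero]; rfl
    refine ⟨y, hxy, ?_⟩
    have hk1 : ι (((T₁ - μ • (1 : B₁ →L[ℂ] B₁))^k) y)
        = ((T₂ - μ • (1 : B₂ →L[ℂ] B₂))^k) (ι y) := by
      apply intertwine_pow
      intro z
      simp only [ContinuousLinearMap.sub_apply, ContinuousLinearMap.smul_apply,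
        ContinuousLinearMap.one_apply, map_sub, map_smul]
      rw [hcomm]
    apply hinj
    rw [hk1, hxy, hx, map_zero]
  refine ⟨⟨?_, ?_⟩, main⟩
  · rintro ⟨z, hz0, hze⟩
    refine ⟨ι z, ?_, ?_⟩
    · intro h
      exact hz0 (hinj (by rw [h, map_zero]))
    · rw [← hcomm, hze, map_smul]
  · rintro ⟨z, hz0, hze⟩
    have hz1 : ((T₂ - μ • (1 : B₂ →L[ℂ] B₂))^1) z = 0 := by
      rw [pow_one]
      simp only [ContinuousLinearMap.sub_apply, ContinuousLinearMap.smul_apply,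
        ContinuousLinearMap.one_apply]
      rw [hze, sub_self]
    obtain ⟨y, hy, hyk⟩ := main 1 z hz1
    refine ⟨y, ?_, ?_⟩
    · intro h
      rw [h, map_zero] at hy
      exact hz0 hy.symm
    · rw [pow_one] at hyk
      simp only [ContinuousLinearMap.sub_apply, ContinuousLinearMap.smul_apply,
        ContinuousLinearMap.one_apply] at hyk
      rw [sub_eq_zero] at hyk
      exact hyk

-- axiom check
-- #print axioms spectral_independence_nested
end

section
/- Let (B_l, d) be a cochain complex of complex vector spaces with a chain endomorphism f_*, and μ ∈ ℂ. Suppose ω ∈ B_l is closed with f_* ω = μ ω + du for some u ∈ B_{l−1}, and suppose the operator (f_* − μ·id) restricted to the subspace of exact elements E_l = d(B_{l−1}) ⊆ B_l is bijective. Then there exists u' ∈ B_{l−1} such that ω' = ω + du' satisfies f_* ω' = μ ω'; in particular [ω'] = [ω] in cohomology and μ is an eigenvalue of f_* on B_l. -/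
/-- If `ω` is closed with `f ω = μ ω + d u`, and `f − μ·id` is bijective on the subspace
of exact elements `E = im d₀`, then `ω` can be corrected by an exact element:
there is `u'` with `ω' = ω + d u'` satisfying `f ω' = μ ω'` (so `[ω'] = [ω]` in
cohomology and `μ` is an eigenvalue of `f` on `B`). -/
theorem correct_by_exact_to_eigenvector
    {Bm B Bp : Type*} [AddCommGroup Bm] [Module ℂ Bm] [AddCommGroup B] [Module ℂ B]
    [AddCommGroup Bp] [Module ℂ Bp]
    (d₀ : Bm →ₗ[ℂ] B) (d₁ : B →ₗ[ℂ] Bp) (hdd : ∀ u, d₁ (d₀ u) = 0)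
    (fm : Bm →ₗ[ℂ] Bm) (f : B →ₗ[ℂ] B) (fp : Bp →ₗ[ℂ] Bp)
    (hc0 : ∀ u, f (d₀ u) = d₀ (fm u)) (hc1 : ∀ x, fp (d₁ x) = d₁ (f x))
    (μ : ℂ) (ω : B) (hclosed : d₁ ω = 0) (u : Bm)
    (hω : f ω = μ • ω + d₀ u)
    (hbij : Function.Bijective (fun e : LinearMap.range d₀ =>
      (⟨f e.1 - μ • e.1, by
        obtain ⟨w, hw⟩ := e.2
        exact ⟨fm w - μ • w, by simp [map_sub, map_smul, ← hc0, hw]⟩⟩ :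
          LinearMap.range d₀))) :
    ∃ u' : Bm, f (ω + d₀ u') = μ • (ω + d₀ u') := by
  obtain ⟨e, he⟩ := hbij.2 ⟨-d₀ u, ⟨-u, by simp⟩⟩
  obtain ⟨u', hu'⟩ := e.2
  refine ⟨u', ?_⟩
  have h : f e.1 - μ • e.1 = -d₀ u := congrArg Subtype.val he
  rw [hu']
  rw [map_add, hω, smul_add]
  have : f e.1 = μ • e.1 - d₀ u := by rw [sub_eq_iff_eq_add] at h; rw [h]; abel
  rw [this]; abel
end
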